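/- Let {Π_{0|0}, Π_{1|0}} and {Π_{0|1}, Π_{1|1}} be two rank-one projective measurements on a 2-dimensional complex Hilbert space. Then there exists an orthonormal basis {e₁, e₂} such that all matrix elements ⟨e_l| Π_{i|j} |e_k⟩ are real. -/

import Mathlib

open Matrix

noncomputable section

private lemma herm_dot {B : Matrix (Fin 2) (Fin 2) ℂ} (hB : B.IsHermitian)
    (x y : Fin 2 → ℂ) :
    (starRingEnd ℂ) (star x ⬝ᵥ (B *ᵥ y)) = star y ⬝ᵥ (B *ᵥ x) := by
  have h1 : star (star x ⬝ᵥ (B *ᵥ y)) = star (B *ᵥ y) ⬝ᵥ x := by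
    rw [star_dotProduct]; simp
  rw [show (starRingEnd ℂ) (star x ⬝ᵥ (B *ᵥ y)) = star (star x ⬝ᵥ (B *ᵥ y)) from rfl, h1,
    star_mulVec, hB.eq, ← dotProduct_mulVec]

private lemma herm_diag_im {B : Matrix (Fin 2) (Fin 2) ℂ} (hB : B.IsHermitian)
    (x : Fin 2 → ℂ) : (star x ⬝ᵥ (B *ᵥ x)).im = 0 := by
  rw [← Complex.conj_eq_iff_im]
  exact herm_dot hB x x

private lemma key_lemma (A B : Matrix (Fin 2) (Fin 2) ℂ)
    (hB : B.IsHermitian)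
    (u : Fin 2 → ℂ) (hu0 : u ≠ 0)
    (hAu : A *ᵥ u = u)
    (hAv : A *ᵥ ![-(starRingEnd ℂ) (u 1), (starRingEnd ℂ) (u 0)] = 0) :
    ∃ e : Fin 2 → (Fin 2 → ℂ),
      (∀ l k, star (e l) ⬝ᵥ e k = if l = k then 1 else 0) ∧
      (∀ l k, (star (e l) ⬝ᵥ (A *ᵥ e k)).im = 0 ∧
              (star (e l) ⬝ᵥ ((1 - A) *ᵥ e k)).im = 0 ∧
              (star (e l) ⬝ᵥ (B *ᵥ e k)).im = 0 ∧
              (star (e l) ⬝ᵥ ((1 - B) *ᵥ e k)).im = 0) := by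
  set v : Fin 2 → ℂ := ![-(starRingEnd ℂ) (u 1), (starRingEnd ℂ) (u 0)] with hv
  -- norms
  set s : ℝ := Complex.normSq (u 0) + Complex.normSq (u 1) with hs
  have hs_pos : 0 < s := by
    rcases Function.ne_iff.mp hu0 with ⟨i, hi⟩
    have h0 : 0 ≤ Complex.normSq (u 0) := Complex.normSq_nonneg _
    have h1 : 0 ≤ Complex.normSq (u 1) := Complex.normSq_nonneg _
    fin_cases i
    · have := Complex.normSq_pos.mpr hi; simpa using by positivity
    · have := Complex.normSq_pos.mpr hi; simpa using by positivity
  have huu : star u ⬝ᵥ u = (s : ℂ) := by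
    simp [dotProduct, Fin.sum_univ_two, hs, Complex.normSq_eq_conj_mul_self]
  have hvv : star v ⬝ᵥ v = (s : ℂ) := by
    simp [dotProduct, Fin.sum_univ_two, hv, hs, Complex.normSq_eq_conj_mul_self]
    ring
  have huv : star u ⬝ᵥ v = 0 := by
    simp [dotProduct, Fin.sum_univ_two, hv]; ring
  have hvu : star v ⬝ᵥ u = 0 := by
    simp [dotProduct, Fin.sum_univ_two, hv]; ring
  set n : ℝ := Real.sqrt s with hn
  have hn_pos : 0 < n := Real.sqrt_pos.mpr hs_pos
  have hn_sq : (n : ℝ) * n = s := Real.mul_self_sqrt hs_pos.le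
  -- phase
  set β : ℂ := star u ⬝ᵥ (B *ᵥ v) with hβ
  set c : ℂ := if β = 0 then 1 else (starRingEnd ℂ) β / ((‖β‖ : ℝ) : ℂ) with hc
  have hc_abs : ‖c‖ = 1 := by
    rw [hc]; split
    · simp
    · rename_i h
      rw [norm_div, Complex.norm_conj, Complex.norm_real, Real.norm_eq_abs,
        abs_of_nonneg (norm_nonneg β), div_self (norm_ne_zero_iff.mpr h)]
  have hc1 : (starRingEnd ℂ) c * c = 1 := by
    have := Complex.normSq_eq_norm_sq c
    rw [← Complex.normSq_eq_conj_mul_self, this, hc_abs]; norm_num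
  have hcβ : (c * β).im = 0 := by
    rcases eq_or_ne β 0 with h | h
    · rw [h, mul_zero]; rfl
    · rw [hc, if_neg h, div_mul_eq_mul_div, mul_comm, Complex.mul_conj,
        ← Complex.ofReal_div, Complex.ofReal_im]
  -- the basis
  have hnc : ((n:ℝ) : ℂ) ≠ 0 := by exact_mod_cast hn_pos.ne'
  have hns : ((n:ℝ) : ℂ) * ((n:ℝ) : ℂ) = ((s:ℝ) : ℂ) := by exact_mod_cast hn_sq
  set e0 : Fin 2 → ℂ := ((n:ℝ) : ℂ)⁻¹ • u with he0def
  set e1 : Fin 2 → ℂ := (c * ((n:ℝ) : ℂ)⁻¹) • v with he1def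
  have hAe0 : A *ᵥ e0 = e0 := by rw [he0def, mulVec_smul, hAu]
  have hAe1 : A *ᵥ e1 = 0 := by rw [he1def, mulVec_smul, hAv, smul_zero]
  have hinv : (((n:ℝ)) : ℂ)⁻¹ * ((((n:ℝ)) : ℂ)⁻¹ * ((s:ℝ) : ℂ)) = 1 := by
    field_simp
    linear_combination -hns
  have horth : ∀ l k, star (![e0, e1] l) ⬝ᵥ (![e0, e1] k) = if l = k then 1 else 0 := by
    intro l k
    fin_cases l <;> fin_cases k <;>
      simp only [Matrix.cons_val_zero, Matrix.cons_val_one, Matrix.head_cons,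
        he0def, he1def, star_smul, smul_dotProduct, dotProduct_smul, smul_eq_mul,
        star_mul', Complex.star_def, map_inv₀, Complex.conj_ofReal,
        huu, hvv, huv, hvu, mul_zero, Fin.mk_zero, Fin.mk_one,
        if_true, if_false, eq_self_iff_true]
    · simpa using hinv
    · simp
    · simp
    · linear_combination ((((n:ℝ)):ℂ)⁻¹ * ((((n:ℝ)):ℂ)⁻¹ * ((s:ℝ):ℂ))) * hc1 + hinv
  have hBe01 : (star e0 ⬝ᵥ (B *ᵥ e1)).im = 0 := by
    have heq : star e0 ⬝ᵥ (B *ᵥ e1) = ((n⁻¹ * n⁻¹ : ℝ) : ℂ) * (c * β) := by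
      rw [he0def, he1def, mulVec_smul, star_smul, smul_dotProduct, dotProduct_smul,
        smul_eq_mul, smul_eq_mul, ← hβ, star_inv₀, Complex.star_def, Complex.conj_ofReal]
      push_cast
      ring
    rw [heq, Complex.mul_im, Complex.ofReal_im, Complex.ofReal_re, hcβ]
    ring
  have hBel : ∀ l k, (star (![e0, e1] l) ⬝ᵥ (B *ᵥ ![e0, e1] k)).im = 0 := by
    intro l k
    fin_cases l <;> fin_cases k
    · exact herm_diag_im hB e0
    · exact hBe01
    · show (star e1 ⬝ᵥ (B *ᵥ e0)).im = 0
      rw [← herm_dot hB e0 e1, Complex.conj_im, hBe01, neg_zero]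
    · exact herm_diag_im hB e1
  refine ⟨![e0, e1], horth, ?_⟩
  intro l k
  refine ⟨?_, ?_, hBel l k, ?_⟩
  · fin_cases k
    · show (star (![e0, e1] l) ⬝ᵥ (A *ᵥ e0)).im = 0
      have h := horth l 0
      rw [Matrix.cons_val_zero] at h
      rw [hAe0, h]
      split <;> rfl
    · show (star (![e0, e1] l) ⬝ᵥ (A *ᵥ e1)).im = 0
      rw [hAe1]
      simp
  · fin_cases k
    · show (star (![e0, e1] l) ⬝ᵥ ((1 - A) *ᵥ e0)).im = 0
      rw [sub_mulVec, one_mulVec, hAe0, sub_self]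
      simp
    · show (star (![e0, e1] l) ⬝ᵥ ((1 - A) *ᵥ e1)).im = 0
      have h := horth l 1
      simp only [Matrix.cons_val_one, Matrix.head_cons, Matrix.cons_val_zero] at h
      rw [sub_mulVec, one_mulVec, hAe1, sub_zero, h]
      split <;> rfl
  · rw [sub_mulVec, one_mulVec, dotProduct_sub, Complex.sub_im, hBel l k, horth l k]
    split <;> simp



theorem real_basis_for_two_qubit_measurements
    (P : Fin 2 → Fin 2 → Matrix (Fin 2) (Fin 2) ℂ)
    (hherm : ∀ j i, (P j i).IsHermitian)
    (hidem : ∀ j i, P j i * P j i = P j i)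
    (hrank : ∀ j i, (P j i).rank = 1)
    (hsum : ∀ j, P j 0 + P j 1 = 1) :
    ∃ e : Fin 2 → (Fin 2 → ℂ),
      (∀ l k, star (e l) ⬝ᵥ e k = if l = k then 1 else 0) ∧
      (∀ l k j i, (star (e l) ⬝ᵥ (P j i *ᵥ e k)).im = 0) := by
  set A := P 0 0 with hAdef
  set B := P 1 0 with hBdef
  have hA01 : P 0 1 = 1 - A := eq_sub_of_add_eq' (hsum 0)
  have hB11 : P 1 1 = 1 - B := eq_sub_of_add_eq' (hsum 1)
  have hAH := hherm 0 0
  have ha : (starRingEnd ℂ) (A 0 0) = A 0 0 := hAH.apply 0 0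
  have hconj : (starRingEnd ℂ) (A 0 1) = A 1 0 := hAH.apply 1 0
  have h00 : A 0 0 * A 0 0 + A 0 1 * A 1 0 = A 0 0 := by
    have := congrFun (congrFun (hidem 0 0) 0) 0
    simpa [Matrix.mul_apply, Fin.sum_univ_two] using this
  have h01 : A 0 0 * A 0 1 + A 0 1 * A 1 1 = A 0 1 := by
    have := congrFun (congrFun (hidem 0 0) 0) 1
    simpa [Matrix.mul_apply, Fin.sum_univ_two] using this
  have h11 : A 1 0 * A 0 1 + A 1 1 * A 1 1 = A 1 1 := by
    have := congrFun (congrFun (hidem 0 0) 1) 1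
    simpa [Matrix.mul_apply, Fin.sum_univ_two] using this
  -- produce an eigenvector u of A
  have main : ∃ u : Fin 2 → ℂ, u ≠ 0 ∧ A *ᵥ u = u ∧
      A *ᵥ ![-(starRingEnd ℂ) (u 1), (starRingEnd ℂ) (u 0)] = 0 := by
    by_cases hb : A 0 1 = 0
    · have hc0 : A 1 0 = 0 := by rw [← hconj, hb, map_zero]
      have ha2 : A 0 0 * (A 0 0 - 1) = 0 := by
        have := h00; rw [hb] at this; linear_combination this
      have hd2 : A 1 1 * (A 1 1 - 1) = 0 := by
        have := h11; rw [hc0] at this; linear_combination this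
      have ha01 : A 0 0 = 0 ∨ A 0 0 = 1 := by
        rcases mul_eq_zero.mp ha2 with h | h
        · exact Or.inl h
        · exact Or.inr (by linear_combination h)
      have hd01 : A 1 1 = 0 ∨ A 1 1 = 1 := by
        rcases mul_eq_zero.mp hd2 with h | h
        · exact Or.inl h
        · exact Or.inr (by linear_combination h)
      rcases ha01 with ha0 | ha1 <;> rcases hd01 with hd0 | hd1
      · -- A = 0 : contradiction with rank
        exfalso
        have hA0 : A = 0 := by
          ext i j
          fin_cases i <;> fin_cases j <;> simp [ha0, hd0, hb, hc0]
        have := hrank 0 0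
        rw [← hAdef, hA0, Matrix.rank_zero] at this
        exact absurd this (by norm_num)
      · -- a = 0, d = 1 : u = ![0,1]
        refine ⟨![0, 1], ?_, ?_, ?_⟩
        · intro h
          have := congrFun h 1
          simp at this
        · funext i
          fin_cases i <;>
            simp [Matrix.mulVec, dotProduct, Fin.sum_univ_two, ha0, hd1, hb, hc0]
        · funext i
          fin_cases i <;>
            simp [Matrix.mulVec, dotProduct, Fin.sum_univ_two, ha0, hd1, hb, hc0]
      · -- a = 1, d = 0 : u = ![1,0]
        refine ⟨![1, 0], ?_, ?_, ?_⟩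
        · intro h
          have := congrFun h 0
          simp at this
        · funext i
          fin_cases i <;>
            simp [Matrix.mulVec, dotProduct, Fin.sum_univ_two, ha1, hd0, hb, hc0]
        · funext i
          fin_cases i <;>
            simp [Matrix.mulVec, dotProduct, Fin.sum_univ_two, ha1, hd0, hb, hc0]
      · -- A = 1 : contradiction with rank
        exfalso
        have hA1 : A = 1 := by
          ext i j
          fin_cases i <;> fin_cases j <;>
            simp [ha1, hd1, hb, hc0, Matrix.one_apply]
        have := hrank 0 0
        rw [← hAdef, hA1, Matrix.rank_one] at this
        simp at this
    · -- off-diagonal nonzero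
      have hd : A 1 1 = 1 - A 0 0 := by
        have h : A 0 1 * (A 0 0 + A 1 1 - 1) = 0 := by linear_combination h01
        rcases mul_eq_zero.mp h with h' | h'
        · exact absurd h' hb
        · linear_combination h'
      have hbc : A 0 1 * A 1 0 = A 0 0 - A 0 0 * A 0 0 := by linear_combination h00
      refine ⟨![A 0 1, 1 - A 0 0], ?_, ?_, ?_⟩
      · intro h
        exact hb (by simpa using congrFun h 0)
      · funext i
        fin_cases i <;>
          simp only [Fin.mk_zero, Fin.mk_one, Matrix.mulVec, dotProduct, Fin.sum_univ_two, Matrix.cons_val_zero,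
            Matrix.cons_val_one, Matrix.head_cons, Fin.isValue]
        · ring
        · rw [hd]; linear_combination hbc
      · have hconj1 : (starRingEnd ℂ) (1 - A 0 0) = 1 - A 0 0 := by
          rw [map_sub, _root_.map_one, ha]
        funext i
        fin_cases i <;>
          simp only [Fin.mk_zero, Fin.mk_one, Matrix.mulVec, dotProduct, Fin.sum_univ_two, Matrix.cons_val_zero,
            Matrix.cons_val_one, Matrix.head_cons, Fin.isValue, hconj1, hconj,
            Pi.zero_apply]
        · linear_combination hbc
        · rw [hd]; ring
  obtain ⟨u, hu0, hAu, hAv⟩ := main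
  obtain ⟨e, he1, he2⟩ := key_lemma A B (hherm 1 0) u hu0 hAu hAv
  refine ⟨e, he1, ?_⟩
  intro l k j i
  fin_cases j <;> fin_cases i <;> simp only [Fin.mk_zero, Fin.mk_one, Fin.isValue]
  · exact (he2 l k).1
  · rw [hA01]; exact (he2 l k).2.1
  · exact (he2 l k).2.2.1
  · rw [hB11]; exact (he2 l k).2.2.2

end
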